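/- Let G be a finite simple locally bipartite graph that contains no copy of H₀. Then for every vertex v of G, the set D_v = {u : the pair u, v is dense} is an independent set of vertices of G. -/

import Mathlib

open SimpleGraph

/-- A finite simple graph is *locally bipartite* if each neighbourhood induces a
bipartite (equivalently, 2-colourable) graph. -/
def LocallyBipartite {V : Type*} (G : SimpleGraph V) : Prop :=
  ∀ v : V, (G.induce (G.neighborSet v)).Colorable 2

/-- `C̄₇`, the complement of the 7-cycle: `i` and `j` are adjacent iff they differ by
`±2` or `±3` modulo 7. -/
def C7bar : SimpleGraph (ZMod 7) :=
  SimpleGraph.fromRel (fun i j => j = i + 2 ∨ j = i + 3)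

/-- `H₀`, the Moser spindle: the 7-cycle `v₀v₁…v₆` together with the edges
`v₀v₂`, `v₀v₅`, `v₁v₃`, `v₄v₆`. -/
def H0 : SimpleGraph (ZMod 7) :=
  SimpleGraph.fromRel (fun i j =>
    j = i + 1 ∨ (i = 0 ∧ j = 2) ∨ (i = 0 ∧ j = 5) ∨ (i = 1 ∧ j = 3) ∨ (i = 4 ∧ j = 6))

/-- `H₁`: the 7-cycle `v₀v₁…v₆` together with the edges
`v₃v₅`, `v₅v₀`, `v₀v₂`, `v₂v₄`, `v₆v₁`. -/
def H1 : SimpleGraph (ZMod 7) :=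
  SimpleGraph.fromRel (fun i j =>
    j = i + 1 ∨ (i = 3 ∧ j = 5) ∨ (i = 5 ∧ j = 0) ∨ (i = 0 ∧ j = 2) ∨
      (i = 2 ∧ j = 4) ∨ (i = 6 ∧ j = 1))

/-- `H₂`: the 7-cycle `v₀v₁…v₆` together with the edges
`v₁v₃`, `v₃v₅`, `v₅v₀`, `v₀v₂`, `v₂v₄`, `v₄v₆`. -/
def H2 : SimpleGraph (ZMod 7) :=
  SimpleGraph.fromRel (fun i j =>
    j = i + 1 ∨ (i = 1 ∧ j = 3) ∨ (i = 3 ∧ j = 5) ∨ (i = 5 ∧ j = 0) ∨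
      (i = 0 ∧ j = 2) ∨ (i = 2 ∧ j = 4) ∨ (i = 4 ∧ j = 6))

/-- `H₂⁺`: the graph `H₂` (on the `some` vertices) together with an extra vertex
(`none`) joined to exactly `v₀`, `v₂` and `v₅`. -/
def H2plus : SimpleGraph (Option (ZMod 7)) :=
  SimpleGraph.fromRel (fun a b =>
    match a, b with
    | some i, some j =>
        j = i + 1 ∨ (i = 1 ∧ j = 3) ∨ (i = 3 ∧ j = 5) ∨ (i = 5 ∧ j = 0) ∨
          (i = 0 ∧ j = 2) ∨ (i = 2 ∧ j = 4) ∨ (i = 4 ∧ j = 6)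
    | none, some j => j = 0 ∨ j = 2 ∨ j = 5
    | _, _ => False)

/-- A graph `G` contains a copy of `H` if there is an injective graph homomorphism
from `H` to `G`, i.e. `G` has a (not necessarily induced) subgraph isomorphic to `H`. -/
def ContainsCopy {W V : Type*} (H : SimpleGraph W) (G : SimpleGraph V) : Prop :=
  ∃ f : H →g G, Function.Injective f

/-- A pair of vertices `u, v` is *dense* if the common neighbourhood of `u` and `v`
contains an edge. -/
def DensePair {V : Type*} (G : SimpleGraph V) (u v : V) : Prop :=
  ∃ x y : V, G.Adj u x ∧ G.Adj v x ∧ G.Adj u y ∧ G.Adj v y ∧ G.Adj x y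

/-- A pair of distinct vertices `u, v` is *sparse* if `u` and `v` are not adjacent and
the common neighbourhood of `u` and `v` contains no edge. -/
def SparsePair {V : Type*} (G : SimpleGraph V) (u v : V) : Prop :=
  u ≠ v ∧ ¬ G.Adj u v ∧ ¬ DensePair G u v

/-- A set of vertices is independent if it contains no edge. -/
def IsIndepSet {V : Type*} (G : SimpleGraph V) (s : Set V) : Prop :=
  ∀ ⦃u⦄, u ∈ s → ∀ ⦃v⦄, v ∈ s → ¬ G.Adj u v


private instance : DecidableRel H0.Adj := fun i j =>
  decidable_of_iff' _ (SimpleGraph.fromRel_adj _ i j)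

private lemma fin2_tri : ∀ a b c : Fin 2, a ≠ b → a ≠ c → b ≠ c → False := by decide

private lemma fin2_c5 : ∀ a b c d e : Fin 2,
    a ≠ b → b ≠ c → c ≠ d → d ≠ e → e ≠ a → False := by
  intro a b c d e h1 h2 h3 h4 h5
  fin_cases a <;> fin_cases b <;> fin_cases c <;> fin_cases d <;> fin_cases e <;> simp_all

/-- No triangle in any neighbourhood of a locally bipartite graph. -/
private lemma noTri {V : Type} (G : SimpleGraph V) (hLB : LocallyBipartite G)
    {a x y z : V} (hax : G.Adj a x) (hay : G.Adj a y) (haz : G.Adj a z)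
    (hxy : G.Adj x y) (hxz : G.Adj x z) (hyz : G.Adj y z) : False := by
  obtain ⟨C⟩ := hLB a
  have e1 : (G.induce (G.neighborSet a)).Adj ⟨x, hax⟩ ⟨y, hay⟩ := hxy
  have e2 : (G.induce (G.neighborSet a)).Adj ⟨x, hax⟩ ⟨z, haz⟩ := hxz
  have e3 : (G.induce (G.neighborSet a)).Adj ⟨y, hay⟩ ⟨z, haz⟩ := hyz
  exact fin2_tri _ _ _ (C.valid e1) (C.valid e2) (C.valid e3)

/-- No 5-cycle in any neighbourhood of a locally bipartite graph. -/
private lemma noC5 {V : Type} (G : SimpleGraph V) (hLB : LocallyBipartite G)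
    {a x0 x1 x2 x3 x4 : V}
    (h0 : G.Adj a x0) (h1 : G.Adj a x1) (h2 : G.Adj a x2) (h3 : G.Adj a x3)
    (h4 : G.Adj a x4) (e0 : G.Adj x0 x1) (e1 : G.Adj x1 x2) (e2 : G.Adj x2 x3)
    (e3 : G.Adj x3 x4) (e4 : G.Adj x4 x0) : False := by
  obtain ⟨C⟩ := hLB a
  have f0 : (G.induce (G.neighborSet a)).Adj ⟨x0, h0⟩ ⟨x1, h1⟩ := e0
  have f1 : (G.induce (G.neighborSet a)).Adj ⟨x1, h1⟩ ⟨x2, h2⟩ := e1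
  have f2 : (G.induce (G.neighborSet a)).Adj ⟨x2, h2⟩ ⟨x3, h3⟩ := e2
  have f3 : (G.induce (G.neighborSet a)).Adj ⟨x3, h3⟩ ⟨x4, h4⟩ := e3
  have f4 : (G.induce (G.neighborSet a)).Adj ⟨x4, h4⟩ ⟨x0, h0⟩ := e4
  exact fin2_c5 _ _ _ _ _ (C.valid f0) (C.valid f1) (C.valid f2)
    (C.valid f3) (C.valid f4)

/-- In a locally bipartite graph containing no copy of `H₀`, for each vertex `v` the set
of vertices forming a dense pair with `v` is independent. -/
theorem densePair_set_independent {V : Type} [Fintype V]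
    (G : SimpleGraph V)
    (hLB : LocallyBipartite G)
    (hH0 : ¬ ContainsCopy H0 G) (v : V) :
    _root_.IsIndepSet G {u : V | DensePair G u v} := by
  intro u1 hu1 u2 hu2 hadj
  obtain ⟨a, b, h1a, hva, h1b, hvb, hab⟩ := hu1
  obtain ⟨c, d, h2c, hvc, h2d, hvd, hcd⟩ := hu2
  -- u1 and u2 are not adjacent to v (else a K4, i.e. a triangle in a nbhd)
  have hu1v : ¬ G.Adj u1 v := fun h =>
    noTri G hLB hva hvb h.symm hab h1a.symm h1b.symm
  have hu2v : ¬ G.Adj u2 v := fun h =>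
    noTri G hLB hvc hvd h.symm hcd h2c.symm h2d.symm
  by_cases hac : a = c
  · subst hac
    exact noC5 G hLB hab hva.symm hcd h2c.symm h1a.symm
      hvb.symm hvd h2d.symm hadj.symm h1b
  by_cases had : a = d
  · subst had
    exact noC5 G hLB hab hva.symm hcd.symm h2d.symm h1a.symm
      hvb.symm hvc h2c.symm hadj.symm h1b
  by_cases hbc : b = c
  · subst hbc
    exact noC5 G hLB hab.symm hvb.symm hcd h2c.symm h1b.symm
      hva.symm hvd h2d.symm hadj.symm h1a
  by_cases hbd : b = d
  · subst hbd
    exact noC5 G hLB hab.symm hvb.symm hcd.symm h2d.symm h1b.symm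
      hva.symm hvc h2c.symm hadj.symm h1a
  -- all seven vertices are distinct: build a copy of H₀
  apply hH0
  have hne_va : v ≠ a := hva.ne
  have hne_vb : v ≠ b := hvb.ne
  have hne_vc : v ≠ c := hvc.ne
  have hne_vd : v ≠ d := hvd.ne
  have hne_vu1 : v ≠ u1 := by intro h; subst h; exact hu2v hadj.symm
  have hne_vu2 : v ≠ u2 := by intro h; subst h; exact hu1v hadj
  have hne_u1a : u1 ≠ a := by intro h; subst h; exact hu1v hva.symm
  have hne_u1b : u1 ≠ b := by intro h; subst h; exact hu1v hvb.symm
  have hne_u1c : u1 ≠ c := by intro h; subst h; exact hu1v hvc.symm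
  have hne_u1d : u1 ≠ d := by intro h; subst h; exact hu1v hvd.symm
  have hne_u2a : u2 ≠ a := by intro h; subst h; exact hu2v hva.symm
  have hne_u2b : u2 ≠ b := by intro h; subst h; exact hu2v hvb.symm
  have hne_u2c : u2 ≠ c := by intro h; subst h; exact hu2v hvc.symm
  have hne_u2d : u2 ≠ d := by intro h; subst h; exact hu2v hvd.symm
  have hne_ab : a ≠ b := hab.ne
  have hne_cd : c ≠ d := hcd.ne
  have hne_u12 : u1 ≠ u2 := hadj.ne
  -- the map 0↦v, 1↦a, 2↦b, 3↦u1, 4↦u2, 5↦c, 6↦d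
  refine ⟨⟨![v, a, b, u1, u2, c, d], ?_⟩, ?_⟩
  · intro i j hij
    fin_cases i <;> fin_cases j <;>
      first
        | exact absurd hij (@of_decide_eq_false _ ((inferInstance : DecidableRel H0.Adj) _ _) rfl)
        | exact hva | exact hva.symm | exact hvb | exact hvb.symm
        | exact hvc | exact hvc.symm | exact hvd | exact hvd.symm
        | exact hab | exact hab.symm | exact hcd | exact hcd.symm
        | exact h1a | exact h1a.symm | exact h1b | exact h1b.symm
        | exact h2c | exact h2c.symm | exact h2d | exact h2d.symm
        | exact hadj | exact hadj.symm
  · show Function.Injective ![v, a, b, u1, u2, c, d]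
    intro i j hij
    fin_cases i <;> fin_cases j <;>
      first
        | rfl
        | exact absurd hij hne_va | exact absurd hij hne_va.symm
        | exact absurd hij hne_vb | exact absurd hij hne_vb.symm
        | exact absurd hij hne_vc | exact absurd hij hne_vc.symm
        | exact absurd hij hne_vd | exact absurd hij hne_vd.symm
        | exact absurd hij hne_vu1 | exact absurd hij hne_vu1.symm
        | exact absurd hij hne_vu2 | exact absurd hij hne_vu2.symm
        | exact absurd hij hne_u1a | exact absurd hij hne_u1a.symm
        | exact absurd hij hne_u1b | exact absurd hij hne_u1b.symm
        | exact absurd hij hne_u1c | exact absurd hij hne_u1c.symm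
        | exact absurd hij hne_u1d | exact absurd hij hne_u1d.symm
        | exact absurd hij hne_u2a | exact absurd hij hne_u2a.symm
        | exact absurd hij hne_u2b | exact absurd hij hne_u2b.symm
        | exact absurd hij hne_u2c | exact absurd hij hne_u2c.symm
        | exact absurd hij hne_u2d | exact absurd hij hne_u2d.symm
        | exact absurd hij hne_ab | exact absurd hij hne_ab.symm
        | exact absurd hij hne_cd | exact absurd hij hne_cd.symm
        | exact absurd hij hne_u12 | exact absurd hij hne_u12.symm
        | exact absurd hij hac | exact absurd hij (Ne.symm hac)
        | exact absurd hij had | exact absurd hij (Ne.symm had)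
        | exact absurd hij hbc | exact absurd hij (Ne.symm hbc)
        | exact absurd hij hbd | exact absurd hij (Ne.symm hbd)
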